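/- Let A be a nonzero symmetric n×n complex matrix (n ≥ 4) with A_{i,i} = 0 and A_{i,i+1} = 0 for all i (indices modulo n, so also A_{1,n} = 0), and suppose every 3×3 minor of A of the form det(A({i, i+1, ..., j}, {j, j+1, ..., n, 1, ..., i})) arising from rank-2 conditions on all 'cyclically contiguous' submatrices vanishes in the sense that rank A({1,...,j},{j,...,n,1}) ≤ 2 for every j. Then there exist indices i, k (taken modulo n) such that A_{i,k} ≠ 0 and A_{i,k+1} = A_{i+1,k} = A_{i+1,k+1} = 0. -/

import Mathlib

open Matrix

lemma myRankSubmatrixLe {m n l l' : Type*} [Fintype m] [Fintype n] [Fintype l] [Fintype l']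
    [DecidableEq m] [DecidableEq n] (A : Matrix m n ℂ) (f : l → m) (g : l' → n) :
    (A.submatrix f g).rank ≤ A.rank := by
  have h : ((1 : Matrix m m ℂ).submatrix f (Equiv.refl m)) * A *
      ((1 : Matrix n n ℂ).submatrix (Equiv.refl n) g) = A.submatrix f g := by
    rw [Matrix.one_submatrix_mul, Matrix.mul_submatrix_one]
    simp [Matrix.submatrix_submatrix, Function.comp]
  rw [← h]
  exact le_trans (Matrix.rank_mul_le_left _ _) (Matrix.rank_mul_le_right _ _)

theorem stmt4 (n : ℕ) (hn : 4 ≤ n) (A : Matrix (ZMod n) (ZMod n) ℂ)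
    (hsymm : A.IsSymm) (hA : A ≠ 0)
    (hdiag : ∀ i, A i i = 0) (hadj : ∀ i, A i (i + 1) = 0)
    -- every cyclically contiguous submatrix whose rows form the arc from `i` to `i + a`
    -- and whose columns form the complementary arc from `i + a` back to `i` has rank ≤ 2
    (hrank : ∀ (i : ZMod n) (a : ℕ), a ≤ n →
      (Matrix.of fun (s : Fin (a + 1)) (t : Fin (n - a + 1)) =>
        A (i + ((s : ℕ) : ZMod n)) (i + (a : ZMod n) + ((t : ℕ) : ZMod n))).rank ≤ 2) :
    ∃ i k : ZMod n, A i k ≠ 0 ∧ A i (k + 1) = 0 ∧ A (i + 1) k = 0 ∧ A (i + 1) (k + 1) = 0 := by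
  haveI : NeZero n := ⟨by omega⟩
  have hsa : ∀ x y : ZMod n, A x y = A y x := fun x y => (congrFun (congrFun hsymm x) y).symm
  -- a nonzero entry exists
  obtain ⟨i0, k0, h00⟩ : ∃ i k : ZMod n, A i k ≠ 0 := by
    by_contra h
    push_neg at h
    exact hA (Matrix.ext fun i j => h i j)
  classical
  set T : Finset (ZMod n × ZMod n) :=
    Finset.univ.filter (fun p : ZMod n × ZMod n => A p.1 p.2 ≠ 0) with hT
  have hTne : T.Nonempty := ⟨(i0, k0), by simp [hT, h00]⟩
  set D : ℕ := T.sup' hTne (fun p => (p.2 - p.1).val) with hDdef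
  have hmax : ∀ x y : ZMod n, A x y ≠ 0 → (y - x).val ≤ D := by
    intro x y h
    have hmem : (x, y) ∈ T := by simp [hT, h]
    exact Finset.le_sup' (fun p : ZMod n × ZMod n => (p.2 - p.1).val) hmem
  have hbig : ∀ x y : ZMod n, D < (y - x).val → A x y = 0 := by
    intro x y h
    by_contra h0
    exact absurd (hmax x y h0) (not_le.mpr h)
  obtain ⟨⟨iw, kw⟩, hwT, hwD⟩ := Finset.exists_mem_eq_sup' hTne (fun p => (p.2 - p.1).val)
  have hDval : D = (kw - iw).val := hwD
  have hAw : A iw kw ≠ 0 := by simpa [hT] using hwT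
  have hadj' : ∀ z : ZMod n, A z (z - 1) = 0 := by
    intro z
    have h1 := hadj (z - 1)
    have h2 : z - 1 + 1 = z := by ring
    rw [h2] at h1
    rw [hsa]
    exact h1
  -- low distances vanish
  have hlow : ∀ x y : ZMod n, A x y ≠ 0 → 2 ≤ (y - x).val := by
    intro x y h
    by_contra h2
    push_neg at h2
    interval_cases hv : (y - x).val
    · have : y - x = 0 := (ZMod.val_eq_zero _).mp hv
      have hxy : y = x := by linear_combination this
      exact h (hxy ▸ hdiag x)
    · have : y - x = ((1 : ℕ) : ZMod n) := by
        rw [← hv, ZMod.natCast_rightInverse (y - x)]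
      rw [Nat.cast_one] at this
      have hxy : y = x + 1 := by linear_combination this
      exact h (hxy ▸ hadj x)
  have hD2 : 2 ≤ D := by rw [hDval]; exact hlow _ _ hAw
  have hDn : D ≤ n - 2 := by
    have hlt : (kw - iw).val < n := ZMod.val_lt _
    by_contra h
    push_neg at h
    have hveq : (kw - iw).val = n - 1 := by omega
    have h1 : kw - iw = ((n - 1 : ℕ) : ZMod n) := by
      rw [← hveq, ZMod.natCast_rightInverse (kw - iw)]
    have h2 : ((n - 1 : ℕ) : ZMod n) = -1 := by
      have h3 : (1 : ℕ) ≤ n := by omega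
      push_cast [h3]
      rw [ZMod.natCast_self]
      ring
    have hk : kw = iw - 1 := by
      rw [h2] at h1
      linear_combination h1
    exact hAw (by rw [hk]; exact hadj' iw)
  set m : ℕ := n - D with hm
  have hm2 : 2 ≤ m := by omega
  have hDm : D + m = n := by omega
  set i : ZMod n := iw with hi
  have hk0 : kw = i + (D : ℕ) := by
    have h1 : ((D : ℕ) : ZMod n) = kw - i := by
      rw [hDval]; exact ZMod.natCast_rightInverse (kw - iw)
    rw [h1]; ring
  have hx : A i (i + (D : ℕ)) ≠ 0 := hk0 ▸ hAw
  set x : ℂ := A i (i + (D : ℕ)) with hxdef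
  -- key cancellation: D + m = 0 in ZMod n
  have h5 : ((D : ℕ) : ZMod n) + ((m : ℕ) : ZMod n) = 0 := by
    rw [← Nat.cast_add, hDm, ZMod.natCast_self]
  have him : i + (D : ℕ) + (m : ℕ) = i := by
    rw [add_assoc, h5, add_zero]
  -- interior vanishing lemma
  have hint : ∀ s t : ℕ, 0 < s → s < D → 0 < t → t < m →
      A (i + (s : ℕ)) (i + (D : ℕ) + (t : ℕ)) = 0 := by
    intro s t hs1 hsD ht1 htm
    by_contra hne
    have hR := hrank i D (by omega)
    set M : Matrix (Fin (D + 1)) (Fin (n - D + 1)) ℂ :=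
      Matrix.of fun (s : Fin (D + 1)) (t : Fin (n - D + 1)) =>
        A (i + ((s : ℕ) : ZMod n)) (i + (D : ZMod n) + ((t : ℕ) : ZMod n)) with hM
    have hmlt : m < n - D + 1 := by omega
    have htlt : t < n - D + 1 := by omega
    let f : Fin 3 → Fin (D + 1) := ![⟨0, by omega⟩, ⟨s, by omega⟩, ⟨D, by omega⟩]
    let g : Fin 3 → Fin (n - D + 1) := ![⟨0, by omega⟩, ⟨t, htlt⟩, ⟨m, hmlt⟩]
    set N : Matrix (Fin 3) (Fin 3) ℂ := M.submatrix f g with hN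
    -- zero facts
    have Z1 : A i (i + (D : ℕ) + (t : ℕ)) = 0 := by
      apply hbig
      have harith : i + (D : ℕ) + (t : ℕ) - i = ((D + t : ℕ) : ZMod n) := by
        push_cast; ring
      rw [harith, ZMod.val_natCast_of_lt (by omega)]
      omega
    have Z2 : A i (i + (D : ℕ) + (m : ℕ)) = 0 := by rw [him]; exact hdiag i
    have Z4 : A (i + (D : ℕ)) (i + (D : ℕ) + (t : ℕ)) = 0 := by
      rw [hsa]
      apply hbig
      have harith : i + (D : ℕ) - (i + (D : ℕ) + (t : ℕ)) = -((t : ℕ) : ZMod n) := by ring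
      rw [harith]
      have htne : ((t : ℕ) : ZMod n) ≠ 0 := by
        intro h0
        have := (ZMod.val_eq_zero _).mpr h0
        rw [ZMod.val_natCast_of_lt (by omega)] at this
        omega
      rw [ZMod.neg_val, if_neg htne, ZMod.val_natCast_of_lt (by omega)]
      omega
    have Z5 : A (i + (D : ℕ)) (i + (D : ℕ) + (m : ℕ)) = x := by
      rw [him, hsa]
    -- entries of N
    have E00 : N 0 0 = x := by simp [hN, hM, f, g]; exact hxdef.symm
    have E01 : N 0 1 = 0 := by simpa [hN, hM, f, g] using Z1
    have E02 : N 0 2 = 0 := by simpa [hN, hM, f, g] using Z2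
    have E20 : N 2 0 = 0 := by simpa [hN, hM, f, g] using hdiag (i + (D : ℕ))
    have E21 : N 2 1 = 0 := by simpa [hN, hM, f, g] using Z4
    have E22 : N 2 2 = x := by simpa [hN, hM, f, g] using Z5
    have E11 : N 1 1 = A (i + (s : ℕ)) (i + (D : ℕ) + (t : ℕ)) := by
      simp [hN, hM, f, g]
    have hdet : N.det ≠ 0 := by
      rw [Matrix.det_fin_three, E00, E01, E02, E20, E21, E22, E11]
      simp only [mul_zero, zero_mul, sub_zero, zero_sub, neg_zero, add_zero, zero_add]
      exact mul_ne_zero (mul_ne_zero hx hne) hx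
    have hrkN : N.rank = 3 := by
      rw [Matrix.rank_of_isUnit N ((Matrix.isUnit_iff_isUnit_det N).mpr
        (isUnit_iff_ne_zero.mpr hdet))]
      simp
    have hle : N.rank ≤ M.rank := myRankSubmatrixLe M f g
    rw [hrkN] at hle
    have : M.rank ≤ 2 := hR
    omega
  -- final selection
  set F : Finset ℕ := (Finset.range (D - 1)).filter
    (fun s => A (i + (s : ℕ)) (i + (D : ℕ)) ≠ 0) with hF
  have h0F : 0 ∈ F := by
    simp only [hF, Finset.mem_filter, Finset.mem_range]
    constructor
    · omega
    · simpa using hx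
  have hFne : F.Nonempty := ⟨0, h0F⟩
  set sm : ℕ := F.max' hFne with hsm
  have hsF : sm ∈ F := F.max'_mem hFne
  have hsD : sm < D - 1 := by
    have := hsF
    rw [hF, Finset.mem_filter, Finset.mem_range] at this
    exact this.1
  have hA1 : A (i + (sm : ℕ)) (i + (D : ℕ)) ≠ 0 := by
    have := hsF
    rw [hF, Finset.mem_filter] at this
    exact this.2
  refine ⟨i + (sm : ℕ), i + (D : ℕ), hA1, ?_, ?_, ?_⟩
  · -- A (i + sm) (i + D + 1) = 0
    rcases Nat.eq_zero_or_pos sm with h0 | hpos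
    · rw [h0]
      simp only [Nat.cast_zero, add_zero]
      apply hbig
      have harith : i + (D : ℕ) + 1 - i = ((D + 1 : ℕ) : ZMod n) := by push_cast; ring
      rw [harith, ZMod.val_natCast_of_lt (by omega)]
      omega
    · have := hint sm 1 hpos (by omega) one_pos (by omega)
      rw [Nat.cast_one] at this
      exact this
  · -- A (i + sm + 1) (i + D) = 0
    have hcast : i + (sm : ℕ) + 1 = i + ((sm + 1 : ℕ) : ZMod n) := by push_cast; ring
    rw [hcast]
    rcases Nat.lt_or_ge (sm + 1) (D - 1) with hlt | hge
    · by_contra hne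
      have hmem : sm + 1 ∈ F := by
        rw [hF, Finset.mem_filter, Finset.mem_range]
        exact ⟨hlt, hne⟩
      have := F.le_max' (sm + 1) hmem
      omega
    · -- sm + 1 = D - 1, so the entry is adjacent
      have heq : sm + 1 = D - 1 := by omega
      rw [heq]
      have hcast2 : i + (D : ℕ) = (i + ((D - 1 : ℕ) : ZMod n)) + 1 := by
        have h6 : ((D - 1 : ℕ) : ZMod n) + 1 = ((D : ℕ) : ZMod n) := by
          have h7 : (1 : ℕ) ≤ D := by omega
          push_cast [h7]
          ring
        rw [add_assoc, h6]
      rw [hcast2]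
      exact hadj _
  · -- A (i + sm + 1) (i + D + 1) = 0
    have := hint (sm + 1) 1 (by omega) (by omega) one_pos (by omega)
    push_cast at this
    simpa [add_assoc] using this
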